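/- Let v be a real-analytic function on a neighborhood of a point c ∈ ℝ², and choose coordinates (x, y) centered at c. Assume that near c, v(x, y) = v₀₀ + v₀₂·y² + p(x, y), where p is analytic with vanishing order at least three at the origin (Lp(0,0) = 0 for every differential operator L of order ≤ 2). If v₀₂ ≠ 0 and q = (x_q, y_q) satisfies x_q ≠ 0 (i.e., q does not lie on the y-axis), then the gradient of R_q v does not vanish at c; in particular, the nodal set {R_q v = 0} is near c a single smooth curve through c, so c is a degree-two vertex of the nodal set of R_q v. -/

import Mathlib

noncomputable section

open Real Set Filter

/-- The partial derivative of `u` in the direction `v`. -/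
def pd (u : ℝ × ℝ → ℝ) (v : ℝ × ℝ) : ℝ × ℝ → ℝ := fun p => fderiv ℝ u p v

/-- The Laplacian of `u`. -/
def lap (u : ℝ × ℝ → ℝ) : ℝ × ℝ → ℝ :=
  fun p => pd (pd u (1, 0)) (1, 0) p + pd (pd u (0, 1)) (0, 1) p

/-- The rotational derivative `R_q u (x,y) = (x - q₁) ∂_y u - (y - q₂) ∂_x u`. -/
def rotDeriv (q : ℝ × ℝ) (u : ℝ × ℝ → ℝ) : ℝ × ℝ → ℝ :=
  fun p => (p.1 - q.1) * pd u (0, 1) p - (p.2 - q.2) * pd u (1, 0) p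
/-- If, in coordinates centered at `c = (0,0)`,
`v(x,y) = v₀₀ + v₀₂ y² + P(x,y)` with `P` of vanishing order at least three, `v₀₂ ≠ 0`,
and `q = (q₁, q₂)` has `q₁ ≠ 0` (i.e. `q` is not on the normal, the `y`-axis), then the
gradient of `R_q v` does not vanish at the origin (so the origin is a degree-two vertex of
the nodal set of `R_q v`). -/
theorem rotational_derivative_nonvanishing_gradient
    (v : ℝ × ℝ → ℝ) (U : Set (ℝ × ℝ)) (hU : U ∈ nhds ((0, 0) : ℝ × ℝ))
    (hv : AnalyticOnNhd ℝ v U)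
    (v00 v02 : ℝ) (P : ℝ × ℝ → ℝ) (hP : AnalyticOnNhd ℝ P U)
    (hPord : ∀ n : ℕ, n ≤ 2 → iteratedFDeriv ℝ n P ((0, 0) : ℝ × ℝ) = 0)
    (hform : ∀ p ∈ U, v p = v00 + v02 * p.2 ^ 2 + P p)
    (hv02 : v02 ≠ 0)
    (q : ℝ × ℝ) (hq : q.1 ≠ 0) :
    fderiv ℝ (rotDeriv q v) ((0, 0) : ℝ × ℝ) ≠ 0 := by
  classical
  set z : ℝ × ℝ := ((0, 0) : ℝ × ℝ) with hzdef
  have h0U : z ∈ U := mem_of_mem_nhds hU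
  -- first derivative of P vanishes at the origin
  have hP1 : fderiv ℝ P z = 0 := by
    refine ContinuousLinearMap.ext fun w => ?_
    have h1 := hPord 1 (by norm_num)
    have := iteratedFDeriv_one_apply (𝕜 := ℝ) (f := P) (x := z) ![w]
    rw [h1] at this
    simpa using this.symm
  -- second derivative of P vanishes at the origin
  have hP2 : fderiv ℝ (fderiv ℝ P) z = 0 := by
    refine ContinuousLinearMap.ext fun u => ContinuousLinearMap.ext fun w => ?_
    have h2 := hPord 2 (by norm_num)
    have := iteratedFDeriv_two_apply (𝕜 := ℝ) P z ![u, w]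
    rw [h2] at this
    simpa using this.symm
  -- analyticity of the derivative of P near the origin
  have hPfa : AnalyticAt ℝ (fderiv ℝ P) z := (hP z h0U).fderiv
  -- the directional derivatives of P have zero derivative at the origin
  have hpdP : ∀ w : ℝ × ℝ, HasFDerivAt (pd P w) (0 : ℝ × ℝ →L[ℝ] ℝ) z := by
    intro w
    have hd : HasFDerivAt (fderiv ℝ P) (fderiv ℝ (fderiv ℝ P) z) z :=
      hPfa.differentiableAt.hasFDerivAt
    have := (ContinuousLinearMap.apply ℝ ℝ w).hasFDerivAt.comp z hd
    rw [hP2] at this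
    simp only [ContinuousLinearMap.comp_zero] at this
    exact this
  have hpdPval : ∀ w : ℝ × ℝ, pd P w z = 0 := by
    intro w
    simp [pd, hP1]
  -- On the interior of U, the derivatives of v are given by the explicit formula
  have hVz : interior U ∈ nhds z :=
    isOpen_interior.mem_nhds (mem_interior_iff_mem_nhds.2 hU)
  set A : ℝ × ℝ → ℝ := fun p => v02 * (p.2 + p.2) + pd P (0, 1) p with hAdef
  set B : ℝ × ℝ → ℝ := fun p => pd P (1, 0) p with hBdef
  have hgform : ∀ p ∈ interior U, ∀ w : ℝ × ℝ,
      fderiv ℝ v p w = v02 * (p.2 * w.2 + p.2 * w.2) + fderiv ℝ P p w := by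
    intro p hp w
    have hpU : p ∈ U := interior_subset hp
    have hnb : U ∈ nhds p := mem_of_superset (isOpen_interior.mem_nhds hp) interior_subset
    have heq : v =ᶠ[nhds p] fun p => v00 + v02 * p.2 ^ 2 + P p :=
      eventuallyEq_of_mem hnb hform
    have hgd : HasFDerivAt (fun p : ℝ × ℝ => v00 + v02 * p.2 ^ 2 + P p)
        ((v02 • (p.2 • ContinuousLinearMap.snd ℝ ℝ ℝ + p.2 • ContinuousLinearMap.snd ℝ ℝ ℝ))
          + fderiv ℝ P p) p := by
      have hfun : (fun p : ℝ × ℝ => v00 + v02 * p.2 ^ 2 + P p)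
          = fun p : ℝ × ℝ => v00 + v02 * (p.2 * p.2) + P p := by
        funext p; ring
      rw [hfun]
      exact (((hasFDerivAt_snd.mul hasFDerivAt_snd).const_mul v02).const_add v00).add
        (hP p hpU).differentiableAt.hasFDerivAt
    rw [heq.fderiv_eq, hgd.fderiv]
    simp [mul_add]
  have hA : pd v (0, 1) =ᶠ[nhds z] A := by
    filter_upwards [hVz] with p hp
    have := hgform p hp (0, 1)
    simpa [pd, hAdef, mul_one] using this
  have hB : pd v (1, 0) =ᶠ[nhds z] B := by
    filter_upwards [hVz] with p hp
    have := hgform p hp (1, 0)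
    simpa [pd, hBdef] using this
  have hrot : rotDeriv q v =ᶠ[nhds z]
      fun p => (p.1 - q.1) * A p - (p.2 - q.2) * B p := by
    filter_upwards [hA, hB] with p h1 h2
    simp only [rotDeriv, h1, h2]
  -- derivatives of A and B at the origin
  have hAder : HasFDerivAt A
      ((v02 • (ContinuousLinearMap.snd ℝ ℝ ℝ + ContinuousLinearMap.snd ℝ ℝ ℝ))
        + (0 : ℝ × ℝ →L[ℝ] ℝ)) z :=
    ((hasFDerivAt_snd.add hasFDerivAt_snd).const_mul v02).add (hpdP (0, 1))
  have hBder : HasFDerivAt B (0 : ℝ × ℝ →L[ℝ] ℝ) z := hpdP (1, 0)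
  have hfst : HasFDerivAt (fun p : ℝ × ℝ => p.1 - q.1) (ContinuousLinearMap.fst ℝ ℝ ℝ) z :=
    hasFDerivAt_fst.sub_const q.1
  have hsnd : HasFDerivAt (fun p : ℝ × ℝ => p.2 - q.2) (ContinuousLinearMap.snd ℝ ℝ ℝ) z :=
    hasFDerivAt_snd.sub_const q.2
  have htot := (hfst.mul hAder).sub (hsnd.mul hBder)
  have hfinal : HasFDerivAt (rotDeriv q v) _ z := htot.congr_of_eventuallyEq hrot
  intro hcontra
  rw [hfinal.fderiv] at hcontra
  have happ := congrArg (fun L : ℝ × ℝ →L[ℝ] ℝ => L ((0 : ℝ), (1 : ℝ))) hcontra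
  have hB0 : pd P (1, 0) 0 = 0 := hpdPval (1, 0)
  have hA0 : pd P (0, 1) 0 = 0 := hpdPval (0, 1)
  simp [hAdef, hBdef, hzdef, hB0, hA0] at happ
  have hB0' : pd P (1, 0) (0, 0) = 0 := hpdPval (1, 0)
  have hqv : q.1 * v02 = 0 := by linarith
  exact hq ((mul_eq_zero.1 hqv).resolve_right hv02)
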